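/- Let (X, α) and (Y, β) be finite productive labelled transition systems over a finite nonempty alphabet A, let f : X → Y be an LTS homomorphism (β(f(x)) = { (a, f(y)) | (a, y) ∈ α x } for all x), let M be a nonempty complete metric space, and let σ be a contraction operator interpretation of A on M. If φ_α and φ_β are the unique solutions of (X, α) and (Y, β) respectively, then φ_α = φ_β ∘ f. -/

import Mathlib

open Filter Topology TopologicalSpace
open scoped NNReal
open scoped ENNReal

/-- Solutions factor through LTS homomorphisms: if `f : X → Y` is a homomorphism
of finite productive LTSs and `φα`, `φβ` are the (unique) solutions of `(X, α)`
and `(Y, β)` for a contraction operator interpretation `σ` on a nonempty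
complete metric space, then `φα = φβ ∘ f`. -/
theorem solution_factors_through_hom {X Y A M : Type} [Finite X] [Finite Y]
    [Fintype A] [Nonempty A]
    [MetricSpace M] [CompleteSpace M] [Nonempty M]
    (α : X → Set (A × X)) (hαfin : ∀ x, (α x).Finite) (hαprod : ∀ x, α x ≠ ∅)
    (β : Y → Set (A × Y)) (hβfin : ∀ y, (β y).Finite) (hβprod : ∀ y, β y ≠ ∅)
    (f : X → Y) (hf : ∀ x, β (f x) = (fun p : A × X => (p.1, f p.2)) '' α x)
    (σ : A → M → M) (c : A → ℝ≥0) (hc : ∀ a, c a < 1)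
    (hσ : ∀ a, LipschitzWith (c a) (σ a))
    (φα : X → NonemptyCompacts M)
    (hφα : ∀ x, (φα x : Set M) = ⋃ p ∈ α x, σ p.1 '' (φα p.2 : Set M))
    (φβ : Y → NonemptyCompacts M)
    (hφβ : ∀ y, (φβ y : Set M) = ⋃ p ∈ β y, σ p.1 '' (φβ p.2 : Set M)) :
    φα = φβ ∘ f := by
  classical
  haveI : Fintype X := Fintype.ofFinite X
  -- rewrite the equation for φβ ∘ f using the homomorphism property
  have hφβf : ∀ x, (φβ (f x) : Set M) = ⋃ p ∈ α x, σ p.1 '' (φβ (f p.2) : Set M) := by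
    intro x
    rw [hφβ (f x), hf x, Set.biUnion_image]
  set d : X → ℝ≥0∞ := fun x => EMetric.hausdorffEdist (φα x : Set M) (φβ (f x) : Set M)
    with hd
  have hdfin : ∀ x, d x ≠ ⊤ := fun x =>
    Metric.hausdorffEdist_ne_top_of_nonempty_of_bounded (φα x).nonempty (φβ (f x)).nonempty
      (φα x).isCompact.isBounded (φβ (f x)).isCompact.isBounded
  set D : ℝ≥0∞ := Finset.univ.sup d with hD
  have hDfin : D ≠ ⊤ := by
    rw [hD, ← lt_top_iff_ne_top, Finset.sup_lt_iff (by simp)]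
    exact fun x _ => lt_top_iff_ne_top.2 (hdfin x)
  set C : ℝ≥0 := Finset.univ.sup c with hC
  have hC1 : C < 1 := by
    rw [hC, Finset.sup_lt_iff (by norm_num)]
    exact fun a _ => hc a
  -- key estimate: d x ≤ C * D
  have key : ∀ x, d x ≤ (C : ℝ≥0∞) * D := by
    intro x
    apply EMetric.hausdorffEdist_le_of_mem_edist
    · intro m hm
      rw [hφα x] at hm
      simp only [Set.mem_iUnion, Set.mem_image, Prod.exists] at hm
      obtain ⟨a, y, hay, m', hm', rfl⟩ := hm
      obtain ⟨n', hn', hinf⟩ := (φβ (f y)).isCompact.exists_infEdist_eq_edist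
        (φβ (f y)).nonempty m'
      refine ⟨σ a n', ?_, ?_⟩
      · rw [hφβf x]
        simp only [Set.mem_iUnion, Set.mem_image, Prod.exists]
        exact ⟨a, y, hay, n', hn', rfl⟩
      · calc edist (σ a m') (σ a n') ≤ (c a : ℝ≥0∞) * edist m' n' := (hσ a).edist_le_mul m' n'
          _ ≤ (C : ℝ≥0∞) * D := by
              apply mul_le_mul'
              · exact_mod_cast Finset.le_sup (Finset.mem_univ a)
              · rw [← hinf]
                exact le_trans (EMetric.infEdist_le_hausdorffEdist_of_mem hm')
                  (Finset.le_sup (f := d) (Finset.mem_univ y))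
    · intro n hn
      rw [hφβf x] at hn
      simp only [Set.mem_iUnion, Set.mem_image, Prod.exists] at hn
      obtain ⟨a, y, hay, n', hn', rfl⟩ := hn
      obtain ⟨m', hm', hinf⟩ := (φα y).isCompact.exists_infEdist_eq_edist
        (φα y).nonempty n'
      refine ⟨σ a m', ?_, ?_⟩
      · rw [hφα x]
        simp only [Set.mem_iUnion, Set.mem_image, Prod.exists]
        exact ⟨a, y, hay, m', hm', rfl⟩
      · calc edist (σ a n') (σ a m') ≤ (c a : ℝ≥0∞) * edist n' m' := (hσ a).edist_le_mul n' m'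
          _ ≤ (C : ℝ≥0∞) * D := by
              apply mul_le_mul'
              · exact_mod_cast Finset.le_sup (Finset.mem_univ a)
              · rw [← hinf]
                refine le_trans ?_ (Finset.le_sup (f := d) (Finset.mem_univ y))
                calc EMetric.infEdist n' (φα y : Set M)
                    ≤ EMetric.hausdorffEdist (φβ (f y) : Set M) (φα y : Set M) :=
                      EMetric.infEdist_le_hausdorffEdist_of_mem hn'
                  _ = d y := EMetric.hausdorffEdist_comm
  have hDle : D ≤ (C : ℝ≥0∞) * D := by
    rw [hD]
    exact Finset.sup_le fun x _ => key x
  have hD0 : D = 0 := by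
    by_contra h0
    have : (C : ℝ≥0∞) * D < 1 * D := by
      rw [mul_comm _ D, mul_comm _ D]
      exact ENNReal.mul_lt_mul_right h0 hDfin (by exact_mod_cast hC1)
    rw [one_mul] at this
    exact absurd (lt_of_le_of_lt hDle this) (lt_irrefl D)
  have : ∀ x, d x = 0 := fun x =>
    le_antisymm (le_trans (Finset.le_sup (f := d) (Finset.mem_univ x)) (le_of_eq hD0))
      zero_le
  funext x
  have := EMetric.hausdorffEdist_zero_iff_eq_of_closed (φα x).isCompact.isClosed
    (φβ (f x)).isCompact.isClosed |>.1 (this x)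
  exact NonemptyCompacts.ext this
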